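/- Let 𝔄₁ and 𝔄₂ be the weighted spaces of families 𝒱 = (𝒱_{knm}(ω)) with norms ‖𝒱‖_i = sup_{ω≠ω'} sup_n ∑_{k,m} (‖𝒱_{knm}(ω)‖ + φ_i ‖∂𝒱_{knm}(ω,ω')‖) e^{|k|/E_i}, i = 1,2, where ∂𝒱(ω,ω') = (𝒱(ω)−𝒱(ω'))/(ω−ω'), and assume ϱ = 1/E₁ − 1/E₂ ≥ 0 and φ₂ ≤ φ₁. Let Γ_{knm}(ω) ∈ B(B(H_m,H_n)) define the entrywise linear map Γ(𝒱)_{knm}(ω) = Γ_{knm}(ω)(𝒱_{knm}(ω)). Then ‖Γ‖_{B(𝔄₁,𝔄₂)} ≤ sup_{ω≠ω'} sup_k sup_{n,m} e^{−ϱ|k|}(‖Γ_{knm}(ω)‖ + φ₂ ‖∂Γ_{knm}(ω,ω')‖). -/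

import Mathlib

set_option maxHeartbeats 2000000
set_option synthInstance.maxHeartbeats 1000000


/-- the entrywise map Γ(𝒱)_{knm}(ω) = Γ_{knm}(ω)(𝒱_{knm}(ω)) between the
weighted spaces 𝔄₁, 𝔄₂ (with data (φ₁,E₁), (φ₂,E₂), ϱ = 1/E₁ − 1/E₂ ≥ 0, φ₂ ≤ φ₁)
has operator norm bounded by
sup_{ω≠ω'} sup_k sup_{n,m} e^{−ϱ|k|}(‖Γ_{knm}(ω)‖ + φ₂‖∂Γ_{knm}(ω,ω')‖):
for any upper bound M of the latter quantity, the 𝔄₂-norm expression of Γ(𝒱) is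
bounded by M times the 𝔄₁-norm of 𝒱. -/
theorem stmt_17 (H : ℕ → Type*) [∀ n, NormedAddCommGroup (H n)]
    [∀ n, InnerProductSpace ℂ (H n)] [∀ n, CompleteSpace (H n)]
    (Ω : Set ℝ) (E₁ E₂ φ₁ φ₂ ϱ : ℝ)
    (hE₁ : 0 < E₁) (hE₂ : 0 < E₂) (hφ₁ : 0 < φ₁) (hφ₂ : 0 < φ₂)
    (hϱ : ϱ = 1 / E₁ - 1 / E₂) (hϱ0 : 0 ≤ ϱ) (hφ : φ₂ ≤ φ₁)
    (Γ : ℝ → ℤ → (n : ℕ) → (m : ℕ) → ((H m →L[ℂ] H n) →L[ℂ] (H m →L[ℂ] H n)))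
    (V : ℝ → ℤ → (n : ℕ) → (m : ℕ) → (H m →L[ℂ] H n))
    (hsum : ∀ ω ∈ Ω, ∀ ω' ∈ Ω, ω ≠ ω' → ∀ n, Summable (fun km : ℤ × ℕ =>
      (‖V ω km.1 n km.2‖ +
          φ₁ * ‖(ω - ω')⁻¹ • (V ω km.1 n km.2 - V ω' km.1 n km.2)‖) *
        Real.exp (|(km.1 : ℝ)| / E₁)))
    (hbdd : BddAbove {x : ℝ | ∃ ω ∈ Ω, ∃ ω' ∈ Ω, ω ≠ ω' ∧ ∃ n, x =
      ∑' km : ℤ × ℕ,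
        (‖V ω km.1 n km.2‖ +
            φ₁ * ‖(ω - ω')⁻¹ • (V ω km.1 n km.2 - V ω' km.1 n km.2)‖) *
          Real.exp (|(km.1 : ℝ)| / E₁)})
    (M : ℝ)
    (hM : ∀ ω ∈ Ω, ∀ ω' ∈ Ω, ω ≠ ω' → ∀ (k : ℤ) (n m : ℕ),
      Real.exp (-ϱ * |(k : ℝ)|) *
          (‖Γ ω k n m‖ + φ₂ * ‖(ω - ω')⁻¹ • (Γ ω k n m - Γ ω' k n m)‖) ≤ M) :
    ∀ ω ∈ Ω, ∀ ω' ∈ Ω, ω ≠ ω' → ∀ n,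
      (∑' km : ℤ × ℕ,
          (‖Γ ω km.1 n km.2 (V ω km.1 n km.2)‖ +
              φ₂ * ‖(ω - ω')⁻¹ •
                (Γ ω km.1 n km.2 (V ω km.1 n km.2) -
                  Γ ω' km.1 n km.2 (V ω' km.1 n km.2))‖) *
            Real.exp (|(km.1 : ℝ)| / E₂))
        ≤ M * sSup {x : ℝ | ∃ ω ∈ Ω, ∃ ω' ∈ Ω, ω ≠ ω' ∧ ∃ n, x =
            ∑' km : ℤ × ℕ,
              (‖V ω km.1 n km.2‖ +
                  φ₁ * ‖(ω - ω')⁻¹ • (V ω km.1 n km.2 - V ω' km.1 n km.2)‖) *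
                Real.exp (|(km.1 : ℝ)| / E₁)} := by
  intro ω hω ω' hω' hne n
  have hM0 : 0 ≤ M := le_trans (by positivity) (hM ω hω ω' hω' hne 0 0 0)
  -- pointwise bound
  have hpt : ∀ km : ℤ × ℕ,
      (‖Γ ω km.1 n km.2 (V ω km.1 n km.2)‖ +
          φ₂ * ‖(ω - ω')⁻¹ •
            (Γ ω km.1 n km.2 (V ω km.1 n km.2) -
              Γ ω' km.1 n km.2 (V ω' km.1 n km.2))‖) *
        Real.exp (|(km.1 : ℝ)| / E₂)
      ≤ M * ((‖V ω km.1 n km.2‖ +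
          φ₁ * ‖(ω - ω')⁻¹ • (V ω km.1 n km.2 - V ω' km.1 n km.2)‖) *
        Real.exp (|(km.1 : ℝ)| / E₁)) := by
    rintro ⟨k, m⟩
    set c : ℝ := (ω - ω')⁻¹ with hc
    set a := ‖Γ ω k n m‖
    set d := ‖c • (Γ ω k n m - Γ ω' k n m)‖
    set b := ‖Γ ω' k n m‖
    set v := ‖V ω k n m‖
    set w := ‖c • (V ω k n m - V ω' k n m)‖
    have hv : 0 ≤ v := norm_nonneg (V ω k n m)
    have hw : 0 ≤ w := norm_nonneg (c • (V ω k n m - V ω' k n m))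
    have ha : 0 ≤ a := norm_nonneg (Γ ω k n m)
    have hb : 0 ≤ b := norm_nonneg (Γ ω' k n m)
    have hd : 0 ≤ d := norm_nonneg (c • (Γ ω k n m - Γ ω' k n m))
    have e1 : Real.exp (-ϱ * |(k : ℝ)|) * Real.exp (ϱ * |(k : ℝ)|) = 1 := by
      rw [← Real.exp_add]; ring_nf; exact Real.exp_zero
    have hMk := hM ω hω ω' hω' hne k n m
    have h2 : a + φ₂ * d ≤ Real.exp (ϱ * |(k : ℝ)|) * M := by
      nlinarith [Real.exp_pos (ϱ * |(k : ℝ)|), Real.exp_pos (-ϱ * |(k : ℝ)|)]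
    have hswap : (ω' - ω)⁻¹ • (Γ ω' k n m - Γ ω k n m)
        = c • (Γ ω k n m - Γ ω' k n m) := by
      rw [hc, ← neg_sub ω ω', ← neg_sub (Γ ω k n m), inv_neg, neg_smul_neg]
    have hMk' := hM ω' hω' ω hω hne.symm k n m
    rw [hswap] at hMk'
    have h3 : b ≤ Real.exp (ϱ * |(k : ℝ)|) * M := by
      nlinarith [Real.exp_pos (ϱ * |(k : ℝ)|), Real.exp_pos (-ϱ * |(k : ℝ)|)]
    have h1 : ‖Γ ω k n m (V ω k n m)‖ ≤ a * v := (Γ ω k n m).le_opNorm _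
    have hkey : c • (Γ ω k n m (V ω k n m) - Γ ω' k n m (V ω' k n m))
        = (c • (Γ ω k n m - Γ ω' k n m)) (V ω k n m)
          + (Γ ω' k n m) (c • (V ω k n m - V ω' k n m)) := by
      simp only [ContinuousLinearMap.smul_apply, ContinuousLinearMap.sub_apply,
        (Γ ω' k n m).map_smul_of_tower, map_sub, smul_sub]
      abel
    have h4 : ‖c • (Γ ω k n m (V ω k n m) - Γ ω' k n m (V ω' k n m))‖
        ≤ d * v + b * w := by
      rw [hkey]
      refine (norm_add_le _ _).trans (add_le_add ?_ ?_)
      · exact (c • (Γ ω k n m - Γ ω' k n m)).le_opNorm _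
      · exact (Γ ω' k n m).le_opNorm _
    have hexp : Real.exp (ϱ * |(k : ℝ)|) * Real.exp (|(k : ℝ)| / E₂)
        = Real.exp (|(k : ℝ)| / E₁) := by
      rw [← Real.exp_add]
      congr 1
      field_simp [hϱ]
      rw [hϱ]; field_simp; ring
    have step : ‖Γ ω k n m (V ω k n m)‖ +
        φ₂ * ‖c • (Γ ω k n m (V ω k n m) - Γ ω' k n m (V ω' k n m))‖
        ≤ Real.exp (ϱ * |(k : ℝ)|) * M * (v + φ₁ * w) := by
      have : ‖Γ ω k n m (V ω k n m)‖ +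
          φ₂ * ‖c • (Γ ω k n m (V ω k n m) - Γ ω' k n m (V ω' k n m))‖
          ≤ (a + φ₂ * d) * v + φ₂ * (b * w) := by nlinarith
      refine this.trans ?_
      have hbw1 : b * w ≤ Real.exp (ϱ * |(k : ℝ)|) * M * w :=
        mul_le_mul_of_nonneg_right h3 hw
      have hbw : φ₂ * (b * w) ≤ φ₁ * (Real.exp (ϱ * |(k : ℝ)|) * M * w) := by
        nlinarith [mul_nonneg (mul_nonneg (Real.exp_pos (ϱ * |(k : ℝ)|)).le hM0) hw]
      nlinarith
    calc (‖Γ ω k n m (V ω k n m)‖ +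
          φ₂ * ‖c • (Γ ω k n m (V ω k n m) - Γ ω' k n m (V ω' k n m))‖) *
          Real.exp (|(k : ℝ)| / E₂)
        ≤ Real.exp (ϱ * |(k : ℝ)|) * M * (v + φ₁ * w) * Real.exp (|(k : ℝ)| / E₂) := by
          exact mul_le_mul_of_nonneg_right step (Real.exp_pos _).le
      _ = M * ((v + φ₁ * w) * Real.exp (|(k : ℝ)| / E₁)) := by
          rw [← hexp]; ring
  -- summability
  have hsumV := hsum ω hω ω' hω' hne n
  have hsumMV : Summable (fun km : ℤ × ℕ =>
      M * ((‖V ω km.1 n km.2‖ +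
          φ₁ * ‖(ω - ω')⁻¹ • (V ω km.1 n km.2 - V ω' km.1 n km.2)‖) *
        Real.exp (|(km.1 : ℝ)| / E₁))) := hsumV.mul_left M
  have hsumΓ : Summable (fun km : ℤ × ℕ =>
      (‖Γ ω km.1 n km.2 (V ω km.1 n km.2)‖ +
          φ₂ * ‖(ω - ω')⁻¹ •
            (Γ ω km.1 n km.2 (V ω km.1 n km.2) -
              Γ ω' km.1 n km.2 (V ω' km.1 n km.2))‖) *
        Real.exp (|(km.1 : ℝ)| / E₂)) := by
    refine Summable.of_nonneg_of_le (fun km => by positivity) hpt hsumMV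
  have h5 := Summable.tsum_le_tsum hpt hsumΓ hsumMV
  rw [tsum_mul_left] at h5
  refine h5.trans ?_
  refine mul_le_mul_of_nonneg_left (le_csSup hbdd ?_) hM0
  exact ⟨ω, hω, ω', hω', hne, n, rfl⟩
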